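/- Under the N-fold Darboux recursion, at each fixed point (x, t) the product T_N(ζ) = T[N](ζ)⋯T[1](ζ), regarded as a rational matrix-valued function of ζ, admits the partial-fraction form T_N(ζ) = I − Σ_{i=1}^N D_i/(ζ − ζ_i*), where each D_i is a 4×4 complex matrix independent of ζ and of rank at most one. -/

import Mathlib

open Matrix Filter Topology

noncomputable section

/-- Partial derivative in the first (space) variable. -/
def dX (f : ℝ × ℝ → ℂ) : ℝ × ℝ → ℂ := fun p => deriv (fun x => f (x, p.2)) p.1

/-- Partial derivative in the second (time) variable. -/
def dT (f : ℝ × ℝ → ℂ) : ℝ × ℝ → ℂ := fun p => deriv (fun t => f (p.1, t)) p.2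

/-- Left-hand side of one component of the vcmKdV equation
`f_t + f_xxx + 3((q†q) f_x + (q†q_x) f)` for `q = (u,v,w)ᵀ`. -/
def vcmLHS (u v w f : ℝ × ℝ → ℂ) (p : ℝ × ℝ) : ℂ :=
  dT f p + dX (dX (dX f)) p
    + 3 * (((starRingEnd ℂ) (u p) * u p + (starRingEnd ℂ) (v p) * v p
            + (starRingEnd ℂ) (w p) * w p) * dX f p
         + ((starRingEnd ℂ) (u p) * dX u p + (starRingEnd ℂ) (v p) * dX v p
            + (starRingEnd ℂ) (w p) * dX w p) * f p)

/-- The vector complex modified KdV equation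
`q_t + q_xxx + 3(q_x q† q + q q† q_x) = 0` for `q = (u,v,w)ᵀ`. -/
def vcmKdVeq (u v w : ℝ × ℝ → ℂ) : Prop :=
  ∀ p : ℝ × ℝ, vcmLHS u v w u p = 0 ∧ vcmLHS u v w v p = 0 ∧ vcmLHS u v w w p = 0

/-- `J = diag(1, -1, -1, -1)`. -/
def Jmat : Matrix (Fin 4) (Fin 4) ℂ := Matrix.diagonal ![1, -1, -1, -1]

/-- The potential matrix `Q` built from the entries `u, v, w`. -/
def Qmat (u v w : ℂ) : Matrix (Fin 4) (Fin 4) ℂ :=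
  !![0, u, v, w;
     -((starRingEnd ℂ) u), 0, 0, 0;
     -((starRingEnd ℂ) v), 0, 0, 0;
     -((starRingEnd ℂ) w), 0, 0, 0]

/-- `U(ζ) = -iζJ + Q`. -/
def Umat (ζ u v w : ℂ) : Matrix (Fin 4) (Fin 4) ℂ :=
  (-Complex.I * ζ) • Jmat + Qmat u v w

/-- `V(ζ) = -4iζ³J + 4ζ²Q - 2iζ(Q² + Q_x)J + (-Q_xx + 2Q³ + Q_x Q - Q Q_x)`. -/
def Vmat (ζ u v w ux vx wx uxx vxx wxx : ℂ) : Matrix (Fin 4) (Fin 4) ℂ :=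
  (-4 * Complex.I * ζ ^ 3) • Jmat + (4 * ζ ^ 2) • Qmat u v w
    - (2 * Complex.I * ζ) • ((Qmat u v w ^ 2 + Qmat ux vx wx) * Jmat)
    + (-Qmat uxx vxx wxx + 2 * Qmat u v w ^ 3
        + Qmat ux vx wx * Qmat u v w - Qmat u v w * Qmat ux vx wx)

/-- `U(ζ)` as a matrix-valued field on `ℝ²`. -/
def Ufield (u v w : ℝ × ℝ → ℂ) (ζ : ℂ) (p : ℝ × ℝ) : Matrix (Fin 4) (Fin 4) ℂ :=
  Umat ζ (u p) (v p) (w p)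

/-- `V(ζ)` as a matrix-valued field on `ℝ²` (with `Q_x`, `Q_xx` the entrywise derivatives). -/
def Vfield (u v w : ℝ × ℝ → ℂ) (ζ : ℂ) (p : ℝ × ℝ) : Matrix (Fin 4) (Fin 4) ℂ :=
  Vmat ζ (u p) (v p) (w p) (dX u p) (dX v p) (dX w p)
    (dX (dX u) p) (dX (dX v) p) (dX (dX w) p)

/-- Entrywise `x`-derivative of a matrix-valued field. -/
def dXM (F : ℝ × ℝ → Matrix (Fin 4) (Fin 4) ℂ) (p : ℝ × ℝ) : Matrix (Fin 4) (Fin 4) ℂ :=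
  Matrix.of fun i j => deriv (fun x => F (x, p.2) i j) p.1

/-- Entrywise `t`-derivative of a matrix-valued field. -/
def dTM (F : ℝ × ℝ → Matrix (Fin 4) (Fin 4) ℂ) (p : ℝ × ℝ) : Matrix (Fin 4) (Fin 4) ℂ :=
  Matrix.of fun i j => deriv (fun t => F (p.1, t) i j) p.2

/-- `Ψ` solves the Lax pair `Ψ_x = U(ζ)Ψ`, `Ψ_t = V(ζ)Ψ` with potentials `(u,v,w)`. -/
def SolvesLax (u v w : ℝ × ℝ → ℂ) (ζ : ℂ) (Ψ : ℝ × ℝ → Fin 4 → ℂ) : Prop :=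
  ∀ p : ℝ × ℝ,
    HasDerivAt (fun x => Ψ (x, p.2)) ((Ufield u v w ζ p).mulVec (Ψ p)) p.1 ∧
    HasDerivAt (fun t => Ψ (p.1, t)) ((Vfield u v w ζ p).mulVec (Ψ p)) p.2

/-- The rank-one projection `ψψ†/(ψ†ψ)`. -/
def projOf (ψ : Fin 4 → ℂ) : Matrix (Fin 4) (Fin 4) ℂ :=
  (star ψ ⬝ᵥ ψ)⁻¹ • vecMulVec ψ (star ψ)

/-- One-fold Darboux matrix `T(ζ) = I - ((ζ₁ - ζ₁*)/(ζ - ζ₁*)) ψψ†/(ψ†ψ)`. -/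
def Tone (ζ₁ ζ : ℂ) (ψ : Fin 4 → ℂ) : Matrix (Fin 4) (Fin 4) ℂ :=
  1 - ((ζ₁ - (starRingEnd ℂ) ζ₁) / (ζ - (starRingEnd ℂ) ζ₁)) • projOf ψ

/-- Transformed potential `f - 2i(ζ₁ - ζ₁*) Ψ₁⁰ (Ψ₁ʲ)* / (Ψ₁†Ψ₁)` of the one-fold DT. -/
def u1of (f : ℝ × ℝ → ℂ) (ζ₁ : ℂ) (Ψ₁ : ℝ × ℝ → Fin 4 → ℂ) (j : Fin 4) : ℝ × ℝ → ℂ :=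
  fun p => f p - 2 * Complex.I * (ζ₁ - (starRingEnd ℂ) ζ₁) * Ψ₁ p 0
      * (starRingEnd ℂ) (Ψ₁ p j) / (star (Ψ₁ p) ⬝ᵥ Ψ₁ p)

/-- The iterated eigenfunctions `Ψ_i^{(k)}` of the `N`-fold Darboux recursion
(0-based indexing: `PsiIter ζs Ψs k i = Ψ_{i+1}^{(k)}`). -/
def PsiIter (ζs : ℕ → ℂ) (Ψs : ℕ → ℝ × ℝ → Fin 4 → ℂ) : ℕ → ℕ → ℝ × ℝ → Fin 4 → ℂ
  | 0, i => Ψs i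
  | k + 1, i => fun p =>
      (Tone (ζs k) (ζs i) (PsiIter ζs Ψs k k p)).mulVec (PsiIter ζs Ψs k i p)

/-- The product `T_N(ζ) = T[N](ζ) ⋯ T[1](ζ)` of the `N`-fold Darboux recursion. -/
def TNmat (ζs : ℕ → ℂ) (Ψs : ℕ → ℝ × ℝ → Fin 4 → ℂ) :
    ℕ → ℂ → ℝ × ℝ → Matrix (Fin 4) (Fin 4) ℂ
  | 0, _, _ => 1
  | k + 1, ζ, p => Tone (ζs k) ζ (PsiIter ζs Ψs k k p) * TNmat ζs Ψs k ζ p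

/-- The explicit eigenfunction of the Lax pair for the zero seed at eigenvalue `ζk`. -/
def seedPsi (ζk : ℂ) (c₁ c₂ c₃ : ℝ) (p : ℝ × ℝ) : Fin 4 → ℂ :=
  ![Complex.exp (-Complex.I * ζk * (4 * p.2 * ζk ^ 2 + p.1)),
    c₁ * Complex.exp (Complex.I * ζk * (4 * p.2 * ζk ^ 2 + p.1)),
    c₂ * Complex.exp (Complex.I * ζk * (4 * p.2 * ζk ^ 2 + p.1)),
    c₃ * Complex.exp (Complex.I * ζk * (4 * p.2 * ζk ^ 2 + p.1))]

/-- The `N×N` matrix `M` with entries `M_{jk} = Ψ_j†Ψ_k/(ζ_k - ζ_j*)`. -/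
def MmatOf {N : ℕ} (ζs : Fin N → ℂ) (Ψs : Fin N → ℝ × ℝ → Fin 4 → ℂ) (p : ℝ × ℝ) :
    Matrix (Fin N) (Fin N) ℂ :=
  Matrix.of fun j k => (star (Ψs j p) ⬝ᵥ Ψs k p) / (ζs k - (starRingEnd ℂ) (ζs j))

/-- The `4×N` matrix `X = (Ψ₁, …, Ψ_N)` whose columns are the eigenfunctions. -/
def XmatOf {N : ℕ} (Ψs : Fin N → ℝ × ℝ → Fin 4 → ℂ) (p : ℝ × ℝ) :
    Matrix (Fin 4) (Fin N) ℂ :=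
  Matrix.of fun a j => Ψs j p a

/-- `M` bordered on the right by the column `c` and at the bottom by the row `(r, 0)`. -/
def bordered {N : ℕ} (M : Matrix (Fin N) (Fin N) ℂ) (c r : Fin N → ℂ) :
    Matrix (Fin (N + 1)) (Fin (N + 1)) ℂ :=
  Matrix.of fun i j =>
    Fin.lastCases
      (Fin.lastCases (0 : ℂ) (fun j' => r j') j)
      (fun i' => Fin.lastCases (c i') (fun j' => M i' j') j)
      i

lemma rank_projOf_le (ψ : Fin 4 → ℂ) : (projOf ψ).rank ≤ 1 := by
  have h : projOf ψ = vecMulVec ((star ψ ⬝ᵥ ψ)⁻¹ • ψ) (star ψ) := by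
    ext i j; simp [projOf, vecMulVec, smul_eq_mul]; ring
  rw [h, vecMulVec_eq Unit]
  exact (rank_mul_le_left _ _).trans ((rank_le_card_width _).trans_eq (by simp))

lemma step_identity (n : ℕ) (b : Fin n → ℂ) (bn c : ℂ) (P : Matrix (Fin 4) (Fin 4) ℂ)
    (D : Fin n → Matrix (Fin 4) (Fin 4) ℂ) (ζ : ℂ)
    (hbn : ∀ i, b i ≠ bn) (hζ : ∀ i, ζ ≠ b i) (hζn : ζ ≠ bn) :
    (1 - (c / (ζ - bn)) • P) * (1 - ∑ i, (ζ - b i)⁻¹ • D i)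
      = 1 - (∑ i, (ζ - b i)⁻¹ • ((1 - (c * (b i - bn)⁻¹) • P) * D i)
             + (ζ - bn)⁻¹ • (P * (c • 1 + ∑ i, (c * (b i - bn)⁻¹) • D i))) := by
  have key : ∀ i, (c / (ζ - bn)) * (ζ - b i)⁻¹
      = (ζ - b i)⁻¹ * (c * (b i - bn)⁻¹) - (ζ - bn)⁻¹ * (c * (b i - bn)⁻¹) := by
    intro i
    have h1 : ζ - bn ≠ 0 := sub_ne_zero.2 hζn
    have h2 : ζ - b i ≠ 0 := sub_ne_zero.2 (hζ i)
    have h3 : b i - bn ≠ 0 := sub_ne_zero.2 (hbn i)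
    field_simp
    ring
  have lhs_eq : (1 - (c / (ζ - bn)) • P) * (1 - ∑ i, (ζ - b i)⁻¹ • D i)
      = 1 - ∑ i, (ζ - b i)⁻¹ • D i - (c / (ζ - bn)) • P
        + ∑ i, ((c / (ζ - bn)) * (ζ - b i)⁻¹) • (P * D i) := by
    rw [mul_sub, sub_mul, sub_mul, one_mul, one_mul, mul_one, smul_mul_assoc,
      Finset.mul_sum, Finset.smul_sum]
    simp only [mul_smul_comm, smul_smul]
    abel
  rw [lhs_eq]
  have rhs1 : ∀ i : Fin n, (ζ - b i)⁻¹ • ((1 - (c * (b i - bn)⁻¹) • P) * D i)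
      = (ζ - b i)⁻¹ • D i - ((ζ - b i)⁻¹ * (c * (b i - bn)⁻¹)) • (P * D i) := by
    intro i
    rw [sub_mul, one_mul, smul_mul_assoc, smul_sub, smul_smul]
  have rhs2 : (ζ - bn)⁻¹ • (P * (c • 1 + ∑ i, (c * (b i - bn)⁻¹) • D i))
      = (c / (ζ - bn)) • P + ∑ i, ((ζ - bn)⁻¹ * (c * (b i - bn)⁻¹)) • (P * D i) := by
    rw [mul_add, smul_add, Finset.mul_sum]
    simp only [mul_smul_comm, mul_one, smul_smul, Finset.smul_sum]
    congr 1
    rw [div_eq_mul_inv]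
    ring_nf
  simp only [rhs1, rhs2, key, sub_smul, Finset.sum_sub_distrib]
  abel


/-- at each fixed point, `T_N(ζ)` admits the partial-fraction form
`T_N(ζ) = I - Σ_{i=1}^N D_i/(ζ - ζ_i*)` with each `D_i` of rank at most one. -/
theorem TN_partial_fraction (N : ℕ) (ζs : ℕ → ℂ) (Ψs : ℕ → ℝ × ℝ → Fin 4 → ℂ)
    (u v w : ℝ × ℝ → ℂ)
    (hu : ContDiff ℝ (⊤ : ℕ∞) u) (hv : ContDiff ℝ (⊤ : ℕ∞) v)
    (hw : ContDiff ℝ (⊤ : ℕ∞) w) (hsol : vcmKdVeq u v w)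
    (hdist : ∀ i j, i < N → j < N → i ≠ j → ζs i ≠ ζs j)
    (hnc : ∀ i j, i < N → j < N → ζs i ≠ (starRingEnd ℂ) (ζs j))
    (hlax : ∀ i, i < N → SolvesLax u v w (ζs i) (Ψs i))
    (hnz : ∀ i, i < N → ∀ p : ℝ × ℝ, Ψs i p ≠ 0)
    (hiter : ∀ k, k < N → ∀ p : ℝ × ℝ, PsiIter ζs Ψs k k p ≠ 0) :
    ∀ p : ℝ × ℝ, ∃ D : Fin N → Matrix (Fin 4) (Fin 4) ℂ,
      (∀ i, (D i).rank ≤ 1) ∧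
      ∀ ζ : ℂ, (∀ i : Fin N, ζ ≠ (starRingEnd ℂ) (ζs i.val)) →
        TNmat ζs Ψs N ζ p
          = 1 - ∑ i : Fin N, (ζ - (starRingEnd ℂ) (ζs i.val))⁻¹ • D i := by
  intro p
  have key : ∀ n, n ≤ N → ∃ D : Fin n → Matrix (Fin 4) (Fin 4) ℂ,
      (∀ i, (D i).rank ≤ 1) ∧
      ∀ ζ : ℂ, (∀ i : Fin n, ζ ≠ (starRingEnd ℂ) (ζs i.val)) →
        TNmat ζs Ψs n ζ p
          = 1 - ∑ i : Fin n, (ζ - (starRingEnd ℂ) (ζs i.val))⁻¹ • D i := by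
    intro n
    induction n with
    | zero =>
      exact fun _ => ⟨fun i => 0, fun i => i.elim0, fun ζ _ => by simp [TNmat]⟩
    | succ n ih =>
      intro hn1
      obtain ⟨D, hrk, hD⟩ := ih (Nat.le_of_succ_le hn1)
      set ψ := PsiIter ζs Ψs n n p with hψ
      set P := projOf ψ with hP
      set c : ℂ := ζs n - (starRingEnd ℂ) (ζs n) with hc
      set b : ℕ → ℂ := fun i => (starRingEnd ℂ) (ζs i) with hb
      refine ⟨fun i => Fin.lastCases
          (P * (c • 1 + ∑ j : Fin n, (c * (b j.val - b n)⁻¹) • D j))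
          (fun i' => (1 - (c * (b i'.val - b n)⁻¹) • P) * D i') i, ?_, ?_⟩
      · intro i
        refine Fin.lastCases ?_ ?_ i
        · simpa using (rank_mul_le_left _ _).trans (rank_projOf_le ψ)
        · intro i'
          simpa using (rank_mul_le_right _ _).trans (hrk i')
      · intro ζ hζ
        have hζ' : ∀ i : Fin n, ζ ≠ b i.val := fun i => by
          simpa using hζ i.castSucc
        have hζn : ζ ≠ b n := by simpa using hζ (Fin.last n)
        have hbn : ∀ i : Fin n, b i.val ≠ b n := by
          intro i h
          exact hdist i.val n (lt_of_lt_of_le i.2 (Nat.le_of_succ_le hn1))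
            (Nat.lt_of_succ_le hn1) (Nat.ne_of_lt i.2)
            ((starRingEnd ℂ).injective h)
        have hT : TNmat ζs Ψs (n + 1) ζ p
            = (1 - (c / (ζ - b n)) • P) * TNmat ζs Ψs n ζ p := by
          rw [TNmat]; rfl
        rw [hT, hD ζ hζ',
          step_identity n (fun i => b i.val) (b n) c P D ζ hbn hζ' hζn,
          Fin.sum_univ_castSucc]
        simp
        rfl
  exact key N le_rfl

end
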